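/- arXiv:1205.4673 — 2 statements merged into one kernel-verified Lean document; each statement's English description precedes it below -/
import Mathlib

section
/- Let A be a d×n random matrix whose entries A_{ij} are i.i.d. standard Gaussian N(0,1) random variables, and let S be a finite set of vectors in ℝ^n with |S| ≤ N. Then for every t with 0 < t < 1, P(there exists h ∈ S with ‖A h‖_2^2 < (1-t) d ‖h‖_2^2) ≤ N · exp((d/2)(t + log(1-t))). -/
open MeasureTheory ProbabilityTheory ENNReal

namespace ChiSqAux

open Real
open scoped NNReal

lemma pdf_mul_eq (a b : ℝ≥0) (ha : a ≠ 0) (hb : b ≠ 0) (y x : ℝ) :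
    gaussianPDFReal 0 a x * gaussianPDFReal x b y =
      gaussianPDFReal 0 (a + b) y *
        gaussianPDFReal ((a : ℝ) * y / ((a : ℝ) + b)) ⟨(a : ℝ) * b / ((a : ℝ) + b),
          by positivity⟩ x := by
  have hA : 0 < (a : ℝ) := by exact_mod_cast pos_iff_ne_zero.2 ha
  have hB : 0 < (b : ℝ) := by exact_mod_cast pos_iff_ne_zero.2 hb
  have hAB : 0 < (a : ℝ) + b := by linarith
  unfold gaussianPDFReal
  simp only [NNReal.coe_mk, NNReal.coe_add]
  have hK : (√(2 * π * a))⁻¹ * (√(2 * π * b))⁻¹ =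
      (√(2 * π * ((a : ℝ) + b)))⁻¹ * (√(2 * π * ((a : ℝ) * b / ((a : ℝ) + b))))⁻¹ := by
    rw [← mul_inv, ← mul_inv, ← Real.sqrt_mul (by positivity), ← Real.sqrt_mul (by positivity)]
    congr 1
    field_simp
  have hE : -(x - 0) ^ 2 / (2 * a) + -(y - x) ^ 2 / (2 * b) =
      -(y - 0) ^ 2 / (2 * ((a : ℝ) + b)) +
        -(x - (a : ℝ) * y / ((a : ℝ) + b)) ^ 2 / (2 * ((a : ℝ) * b / ((a : ℝ) + b))) := by
    field_simp
    ring
  calc (√(2 * π * a))⁻¹ * rexp (-(x - 0) ^ 2 / (2 * a)) *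
        ((√(2 * π * b))⁻¹ * rexp (-(y - x) ^ 2 / (2 * b)))
      = (√(2 * π * a))⁻¹ * (√(2 * π * b))⁻¹ *
          rexp (-(x - 0) ^ 2 / (2 * a) + -(y - x) ^ 2 / (2 * b)) := by
        rw [Real.exp_add]; ring
    _ = (√(2 * π * ((a : ℝ) + b)))⁻¹ * (√(2 * π * ((a : ℝ) * b / ((a : ℝ) + b))))⁻¹ *
          rexp (-(y - 0) ^ 2 / (2 * ((a : ℝ) + b)) +
            -(x - (a : ℝ) * y / ((a : ℝ) + b)) ^ 2 / (2 * ((a : ℝ) * b / ((a : ℝ) + b)))) := by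
        rw [hK, hE]
    _ = _ := by rw [Real.exp_add]; simp only [NNReal.toReal]; ring

lemma measurable_pdf2 (b : ℝ≥0) : Measurable (fun p : ℝ × ℝ => gaussianPDF p.1 b p.2) := by
  unfold gaussianPDF gaussianPDFReal
  fun_prop

lemma gaussian_conv (a b : ℝ≥0) :
    Measure.map (fun p : ℝ × ℝ => p.1 + p.2) ((gaussianReal 0 a).prod (gaussianReal 0 b)) =
      gaussianReal 0 (a + b) := by
  by_cases hb : b = 0
  · subst hb
    rw [gaussianReal_zero_var, Measure.prod_dirac, Measure.map_map measurable_add (by fun_prop)]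
    have : ((fun p : ℝ × ℝ => p.1 + p.2) ∘ fun x : ℝ => (x, (0 : ℝ))) = id := by
      funext y; simp
    rw [this, Measure.map_id, add_zero]
  by_cases ha : a = 0
  · subst ha
    rw [gaussianReal_zero_var, Measure.dirac_prod, Measure.map_map measurable_add (by fun_prop)]
    have : ((fun p : ℝ × ℝ => p.1 + p.2) ∘ fun y : ℝ => ((0 : ℝ), y)) = id := by
      funext y; simp
    rw [this, Measure.map_id, zero_add]
  have hab : a + b ≠ 0 := by simp [ha]
  have haR : 0 < (a : ℝ) := by exact_mod_cast pos_iff_ne_zero.2 ha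
  have hbR : 0 < (b : ℝ) := by exact_mod_cast pos_iff_ne_zero.2 hb
  ext s hs
  rw [Measure.map_apply measurable_add hs,
    Measure.prod_apply (measurable_add hs)]
  have h1 : ∀ x : ℝ, (gaussianReal 0 b) (Prod.mk x ⁻¹' ((fun p : ℝ × ℝ => p.1 + p.2) ⁻¹' s)) =
      ∫⁻ y, ({p : ℝ × ℝ | p.2 ∈ s}.indicator (fun p => gaussianPDF p.1 b p.2) (x, y)) := by
    intro x
    have h2 : Prod.mk x ⁻¹' ((fun p : ℝ × ℝ => p.1 + p.2) ⁻¹' s) = (fun y => x + y) ⁻¹' s := rfl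
    rw [h2, ← Measure.map_apply (by fun_prop) hs, gaussianReal_map_const_add, zero_add,
      gaussianReal_apply _ hb, ← lintegral_indicator hs]
    refine lintegral_congr fun y => ?_
    by_cases hy : y ∈ s <;> simp [Set.indicator_apply, hy]
  simp_rw [h1]
  rw [gaussianReal_of_var_ne_zero _ ha, lintegral_withDensity_eq_lintegral_mul _
    (measurable_gaussianPDF _ _) ?meas1]
  case meas1 =>
    exact Measurable.lintegral_prod_right (((measurable_pdf2 b).indicator
      (measurable_snd hs)))
  have hmeas2 : Measurable (Function.uncurry fun x y =>
      gaussianPDF 0 a x * {p : ℝ × ℝ | p.2 ∈ s}.indicator (fun p => gaussianPDF p.1 b p.2) (x, y)) := by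
    exact (((measurable_gaussianPDF 0 a).comp measurable_fst).mul
      ((measurable_pdf2 b).indicator (measurable_snd hs)))
  calc ∫⁻ x, gaussianPDF 0 a x *
        ∫⁻ y, {p : ℝ × ℝ | p.2 ∈ s}.indicator (fun p => gaussianPDF p.1 b p.2) (x, y)
      = ∫⁻ x, ∫⁻ y, gaussianPDF 0 a x *
          {p : ℝ × ℝ | p.2 ∈ s}.indicator (fun p => gaussianPDF p.1 b p.2) (x, y) := by
        congr 1; funext x
        have hm : Measurable (fun y : ℝ =>
            {p : ℝ × ℝ | p.2 ∈ s}.indicator (fun p => gaussianPDF p.1 b p.2) (x, y)) :=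
          ((measurable_pdf2 b).indicator (measurable_snd hs)).comp measurable_prodMk_left
        rw [lintegral_const_mul _ hm]
    _ = ∫⁻ y, ∫⁻ x, gaussianPDF 0 a x *
          {p : ℝ × ℝ | p.2 ∈ s}.indicator (fun p => gaussianPDF p.1 b p.2) (x, y) := by
        exact lintegral_lintegral_swap hmeas2.aemeasurable
    _ = ∫⁻ y, s.indicator (fun y => ∫⁻ x, gaussianPDF 0 a x * gaussianPDF x b y) y := by
        congr 1; funext y
        by_cases hy : y ∈ s
        · rw [Set.indicator_of_mem hy]
          congr 1; funext x
          rw [Set.indicator_of_mem (by exact hy)]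
        · rw [Set.indicator_of_notMem hy]
          have : ∀ x : ℝ, {p : ℝ × ℝ | p.2 ∈ s}.indicator
              (fun p => gaussianPDF p.1 b p.2) (x, y) = 0 := fun x =>
            Set.indicator_of_notMem (by exact hy) _
          simp_rw [this, mul_zero, lintegral_zero]
    _ = ∫⁻ y in s, ∫⁻ x, gaussianPDF 0 a x * gaussianPDF x b y := by
        rw [lintegral_indicator hs]
    _ = ∫⁻ y in s, gaussianPDF 0 (a + b) y := by
        refine setLIntegral_congr_fun hs (fun y _ => ?_)
        have hint : Integrable (fun x => gaussianPDFReal 0 a x * gaussianPDFReal x b y) := by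
          have : (fun x => gaussianPDFReal 0 a x * gaussianPDFReal x b y) =
              fun x => gaussianPDFReal 0 (a + b) y *
                gaussianPDFReal ((a : ℝ) * y / ((a : ℝ) + b))
                  ⟨(a : ℝ) * b / ((a : ℝ) + b), by positivity⟩ x := by
            funext x; exact pdf_mul_eq a b ha hb y x
          rw [this]
          exact (integrable_gaussianPDFReal _ _).const_mul _
        have h3 : ∀ x : ℝ, gaussianPDF 0 a x * gaussianPDF x b y =
            ENNReal.ofReal (gaussianPDFReal 0 a x * gaussianPDFReal x b y) := by
          intro x
          rw [gaussianPDF, gaussianPDF, ← ENNReal.ofReal_mul (gaussianPDFReal_nonneg _ _ _)]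
        simp_rw [h3]
        rw [← ofReal_integral_eq_lintegral_ofReal hint (ae_of_all _ fun x =>
          mul_nonneg (gaussianPDFReal_nonneg _ _ _) (gaussianPDFReal_nonneg _ _ _))]
        simp_rw [pdf_mul_eq a b ha hb y]
        erw [integral_const_mul, integral_gaussianPDFReal_eq_one _ (by
          intro h0; have h1 := congrArg NNReal.toReal h0
          change (a : ℝ) * b / ((a : ℝ) + b) = 0 at h1
          exact absurd h1 (by positivity)), mul_one]
        rfl
    _ = gaussianReal 0 (a + b) s := (gaussianReal_apply _ hab s).symm

lemma lintegral_exp_neg_sq (v : ℝ≥0) {l : ℝ} (hl : 0 ≤ l) :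
    ∫⁻ x : ℝ, ENNReal.ofReal (rexp (-(l * x ^ 2))) ∂(gaussianReal 0 v) =
      ENNReal.ofReal ((√(1 + 2 * l * v))⁻¹) := by
  by_cases hv : v = 0
  · subst hv
    rw [gaussianReal_zero_var, lintegral_dirac' _ (by fun_prop)]
    norm_num
  have hvR : 0 < (v : ℝ) := by exact_mod_cast pos_iff_ne_zero.2 hv
  set k : ℝ := l + (2 * (v : ℝ))⁻¹ with hk
  have hkpos : 0 < k := by positivity
  rw [gaussianReal_of_var_ne_zero _ hv, lintegral_withDensity_eq_lintegral_mul _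
    (measurable_gaussianPDF _ _) (by fun_prop)]
  have hfeq : ∀ x : ℝ, gaussianPDFReal 0 v x * rexp (-(l * x ^ 2)) =
      (√(2 * π * v))⁻¹ * rexp (-k * x ^ 2) := by
    intro x
    unfold gaussianPDFReal
    rw [mul_assoc, ← Real.exp_add]
    have hvne : (v : ℝ) ≠ 0 := ne_of_gt hvR
    congr 2
    rw [hk]
    field_simp
    ring
  have hint : Integrable (fun x => gaussianPDFReal 0 v x * rexp (-(l * x ^ 2))) := by
    simp_rw [hfeq]
    exact (integrable_exp_neg_mul_sq hkpos).const_mul _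
  have h1 : ∀ x : ℝ, gaussianPDF 0 v x * ENNReal.ofReal (rexp (-(l * x ^ 2))) =
      ENNReal.ofReal (gaussianPDFReal 0 v x * rexp (-(l * x ^ 2))) := fun x => by
    rw [gaussianPDF, ← ENNReal.ofReal_mul (gaussianPDFReal_nonneg _ _ _)]
  simp only [Pi.mul_apply]
  simp_rw [h1]
  rw [← ofReal_integral_eq_lintegral_ofReal hint (ae_of_all _ fun x =>
    mul_nonneg (gaussianPDFReal_nonneg _ _ _) (Real.exp_nonneg _))]
  congr 1
  simp_rw [hfeq]
  rw [MeasureTheory.integral_const_mul, integral_gaussian]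
  rw [← Real.sqrt_inv (2 * π * (v : ℝ)), ← Real.sqrt_mul (by positivity),
    show (2 * π * (v : ℝ))⁻¹ * (π / k) = (1 + 2 * l * v)⁻¹ by
      have hπ : (0:ℝ) < π := pi_pos
      rw [hk]; field_simp; ring,
    Real.sqrt_inv]


variable {Ω : Type*} [MeasureSpace Ω]

lemma indepFun_gauss_add [IsProbabilityMeasure (ℙ : Measure Ω)] {X Y : Ω → ℝ} {a b : ℝ≥0}
    (h : IndepFun X Y ℙ) (hX : Measure.map X ℙ = gaussianReal 0 a)
    (hY : Measure.map Y ℙ = gaussianReal 0 b) :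
    Measure.map (fun ω => X ω + Y ω) ℙ = gaussianReal 0 (a + b) := by
  have hXm : AEMeasurable X ℙ := aemeasurable_of_map_neZero (by rw [hX]; infer_instance)
  have hYm : AEMeasurable Y ℙ := aemeasurable_of_map_neZero (by rw [hY]; infer_instance)
  have hpair := (indepFun_iff_map_prod_eq_prod_map_map hXm hYm).1 h
  have h2 : (fun ω => X ω + Y ω) = (fun p : ℝ × ℝ => p.1 + p.2) ∘ (fun ω => (X ω, Y ω)) := rfl
  rw [h2, ← AEMeasurable.map_map_of_aemeasurable measurable_add.aemeasurable
    (hXm.prodMk hYm), hpair, hX, hY, gaussian_conv]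

lemma sum_indep_gauss {ι : Type*} [IsProbabilityMeasure (ℙ : Measure Ω)]
    {X : ι → Ω → ℝ} {v : ι → ℝ≥0}
    (hindep : iIndepFun X ℙ) (hm : ∀ i, Measurable (X i))
    (hX : ∀ i, Measure.map (X i) ℙ = gaussianReal 0 (v i)) (s : Finset ι) :
    Measure.map (fun ω => ∑ i ∈ s, X i ω) ℙ = gaussianReal 0 (∑ i ∈ s, v i) := by
  classical
  induction s using Finset.induction with
  | empty =>
      simp only [Finset.sum_empty]
      rw [show (fun _ : Ω => (0 : ℝ)) = fun _ => (0 : ℝ) from rfl, Measure.map_const,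
        measure_univ, one_smul, gaussianReal_zero_var]
  | @insert a s' ha ih =>
      rw [Finset.sum_insert ha]
      have hi : IndepFun (X a) (fun ω => ∑ i ∈ s', X i ω) ℙ := by
        have := (hindep.indepFun_finset_sum_of_notMem hm ha).symm
        have he : (∑ i ∈ s', X i) = fun ω => ∑ i ∈ s', X i ω := by
          funext ω; simp [Finset.sum_apply]
        rwa [he] at this
      simp_rw [Finset.sum_insert ha]
      exact indepFun_gauss_add hi (hX a) ih

lemma iIndepFun_precomp {ι κ β : Type*} {mβ : MeasurableSpace β} {f : ι → Ω → β} {g : κ → ι}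
    (hg : Function.Injective g) (h : iIndepFun f ℙ) :
    iIndepFun (fun k => f (g k)) ℙ := by
  classical
  rw [iIndepFun_iff_measure_inter_preimage_eq_mul] at h ⊢
  intro S sets hsets
  have hext : ∀ k, Function.extend g sets (fun _ => Set.univ) (g k) = sets k :=
    fun k => hg.extend_apply _ _ _
  have hmeas : ∀ i ∈ S.image g,
      MeasurableSet[mβ] (Function.extend g sets (fun _ => Set.univ) i) := by
    intro i hi
    obtain ⟨k, hk, rfl⟩ := Finset.mem_image.1 hi
    rw [hext]
    exact hsets k hk
  have := h (S.image g) hmeas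
  rw [Finset.prod_image (fun x _ y _ h => hg h)] at this
  simp_rw [hext] at this
  rw [← this]
  congr 1
  rw [Finset.set_biInter_finset_image]
  exact Set.iInter₂_congr fun k _ => by rw [hext]

lemma iIndepFun_congr_ae {ι β : Type*} {mβ : MeasurableSpace β} {f g : ι → Ω → β}
    (h : iIndepFun f ℙ) (hfg : ∀ i, f i =ᵐ[ℙ] g i) :
    iIndepFun g ℙ := by
  rw [iIndepFun_iff_measure_inter_preimage_eq_mul] at h ⊢
  intro S sets hsets
  have h1 : ∀ i, (f i ⁻¹' sets i : Set Ω) =ᵐ[ℙ] (g i ⁻¹' sets i : Set Ω) := by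
    intro i
    rw [Filter.eventuallyEq_set]
    filter_upwards [hfg i] with ω hω
    simp [Set.mem_preimage, hω]
  have hae : ∀ᵐ ω ∂(ℙ : Measure Ω), ∀ i ∈ S, f i ω = g i ω :=
    (ae_ball_iff S.countable_toSet).2 fun i _ => hfg i
  have h2 : (⋂ i ∈ S, f i ⁻¹' sets i : Set Ω) =ᵐ[ℙ] (⋂ i ∈ S, g i ⁻¹' sets i : Set Ω) := by
    rw [Filter.eventuallyEq_set]
    filter_upwards [hae] with ω hω
    simp only [Set.mem_iInter, Set.mem_preimage]
    exact ⟨fun H i hi => (hω i hi) ▸ H i hi, fun H i hi => (hω i hi).symm ▸ H i hi⟩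
  rw [← measure_congr h2, h S hsets]
  exact Finset.prod_congr rfl fun i _ => measure_congr (h1 i)

lemma lintegral_prod_rows [IsProbabilityMeasure (ℙ : Measure Ω)] {d n : ℕ} {A : Fin d → Fin n → Ω → ℝ}
    (hmeas : ∀ i j, Measurable (A i j))
    (hindep : iIndepFun (fun p : Fin d × Fin n => A p.1 p.2) ℙ)
    (g : Fin d → (Fin n → ℝ) → ℝ≥0∞) (hg : ∀ i, Measurable (g i)) (s : Finset (Fin d)) :
    ∫⁻ ω, ∏ i ∈ s, g i (fun j => A i j ω) ∂ℙ =
      ∏ i ∈ s, ∫⁻ ω, g i (fun j => A i j ω) ∂ℙ := by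
  classical
  induction s using Finset.induction with
  | empty => simp
  | @insert a s' ha ih =>
      simp only [Finset.prod_insert ha]
      have hrow : ∀ i : Fin d, Measurable (fun ω (j : Fin n) => A i j ω) :=
        fun i => measurable_pi_lambda _ fun j => hmeas i j
      have hIF := hindep.indepFun_finset (({a} : Finset (Fin d)) ×ˢ Finset.univ)
        (s' ×ˢ Finset.univ)
        (by
          rw [Finset.disjoint_left]
          rintro ⟨i, j⟩ hij hij'
          simp only [Finset.mem_product, Finset.mem_singleton] at hij hij'
          exact ha (hij.1 ▸ hij'.1))
        (fun p => hmeas p.1 p.2)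
      set φ : ((({a} : Finset (Fin d)) ×ˢ (Finset.univ : Finset (Fin n))) → ℝ) → ℝ≥0∞ :=
        fun v => g a (fun j => v ⟨(a, j), by simp⟩) with hφ
      set ψ : ((s' ×ˢ (Finset.univ : Finset (Fin n))) → ℝ) → ℝ≥0∞ :=
        fun v => ∏ i ∈ s'.attach, g i.1 (fun j => v ⟨(i.1, j), by simp [i.2]⟩) with hψ
      have hφm : Measurable φ :=
        (hg a).comp (measurable_pi_lambda _ fun j => measurable_pi_apply _)
      have hψm : Measurable ψ :=
        Finset.measurable_prod _ fun i _ =>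
          (hg i.1).comp (measurable_pi_lambda _ fun j => measurable_pi_apply _)
      have hIF2 := hIF.comp hφm hψm
      have he1 : (φ ∘ fun ω (p : (({a} : Finset (Fin d)) ×ˢ (Finset.univ : Finset (Fin n)))) =>
          A p.1.1 p.1.2 ω) = fun ω => g a (fun j => A a j ω) := rfl
      have he2 : (ψ ∘ fun ω (p : (s' ×ˢ (Finset.univ : Finset (Fin n)))) =>
          A p.1.1 p.1.2 ω) = fun ω => ∏ i ∈ s', g i (fun j => A i j ω) := by
        funext ω
        simp only [Function.comp_apply, hψ]
        rw [← Finset.prod_attach s' (fun i => g i (fun j => A i j ω))]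
      rw [he1, he2] at hIF2
      have hmul := lintegral_mul_eq_lintegral_mul_lintegral_of_indepFun
        ((hg a).comp (hrow a))
        (Finset.measurable_prod _ fun i _ => (hg i).comp (hrow i)) hIF2
      have : ∫⁻ ω, g a (fun j => A a j ω) * ∏ i ∈ s', g i (fun j => A i j ω) ∂ℙ =
          (∫⁻ ω, g a (fun j => A a j ω) ∂ℙ) * ∫⁻ ω, ∏ i ∈ s', g i (fun j => A i j ω) ∂ℙ := hmul
      rw [this, ih]

lemma chernoff_one [IsProbabilityMeasure (ℙ : Measure Ω)] {d n : ℕ}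
    {A : Fin d → Fin n → Ω → ℝ}
    (hmeas : ∀ i j, Measurable (A i j))
    (hindep : iIndepFun (fun p : Fin d × Fin n => A p.1 p.2) ℙ)
    (hA : ∀ i j, Measure.map (A i j) ℙ = gaussianReal 0 1)
    (h : Fin n → ℝ) {t : ℝ} (ht0 : 0 < t) (ht1 : t < 1) :
    ℙ {ω | ∑ i, (∑ j, A i j ω * h j) ^ 2 < (1 - t) * d * ∑ j, (h j) ^ 2} ≤
      ENNReal.ofReal (Real.exp (((d : ℝ) / 2) * (t + Real.log (1 - t)))) := by
  classical
  set σ2 : ℝ := ∑ j, (h j) ^ 2 with hσ2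
  have hσ2nn : 0 ≤ σ2 := Finset.sum_nonneg fun j _ => sq_nonneg _
  rcases eq_or_lt_of_le hσ2nn with hσ0 | hσpos
  · -- degenerate case: h = 0
    have hempty : {ω : Ω | ∑ i, (∑ j, A i j ω * h j) ^ 2 < (1 - t) * d * σ2} = ∅ := by
      ext ω
      simp only [Set.mem_setOf_eq, Set.mem_empty_iff_false, iff_false, not_lt, ← hσ0, mul_zero]
      exact Finset.sum_nonneg fun i _ => sq_nonneg _
    rw [hempty]
    simp
  -- main case
  have h1t : 0 < 1 - t := by linarith
  set l : ℝ := t / (2 * (1 - t) * σ2) with hl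
  have hlpos : 0 < l := by positivity
  set W : Fin d → Ω → ℝ := fun i ω => ∑ j, A i j ω * h j with hW
  have hWmeas : ∀ i, Measurable (W i) :=
    fun i => Finset.measurable_sum _ fun j _ => (hmeas i j).mul_const _
  set v : Fin n → ℝ≥0 := fun j => ⟨(h j) ^ 2, sq_nonneg _⟩ with hv
  set V : ℝ≥0 := ∑ j, v j with hV
  have hVR : (V : ℝ) = σ2 := by
    rw [hV, NNReal.coe_sum, hσ2]
    exact Finset.sum_congr rfl fun j _ => rfl
  have hWlaw : ∀ i, Measure.map (W i) ℙ = gaussianReal 0 V := by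
    intro i
    have hrowind : iIndepFun (fun j : Fin n => A i j) ℙ :=
      iIndepFun_precomp (g := fun j : Fin n => ((i, j) : Fin d × Fin n))
        (fun j j' e => by simpa using congrArg Prod.snd e) hindep
    have hXind : iIndepFun (fun j ω => A i j ω * h j) ℙ :=
      hrowind.comp (fun j x => x * h j) (fun j => measurable_mul_const _)
    have hXlaw : ∀ j, Measure.map (fun ω => A i j ω * h j) ℙ = gaussianReal 0 (v j) := by
      intro j
      have he : (fun ω => A i j ω * h j) = (· * h j) ∘ A i j := rfl
      rw [he, ← Measure.map_map (measurable_mul_const _) (hmeas i j), hA i j,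
        gaussianReal_map_mul_const]
      norm_num [hv]
      rfl
    exact sum_indep_gauss hXind (fun j => (hmeas i j).mul_const _) hXlaw Finset.univ
  set c : ℝ := (1 - t) * d * σ2 with hc
  set g : Fin d → (Fin n → ℝ) → ℝ≥0∞ :=
    fun i x => ENNReal.ofReal (rexp (-(l * (∑ j, x j * h j) ^ 2))) with hg
  have hgmeas : ∀ i, Measurable (g i) := by
    intro i
    apply Measurable.ennreal_ofReal
    fun_prop
  have hEv : MeasurableSet {ω : Ω | ∑ i, (W i ω) ^ 2 < c} := by
    have : Measurable fun ω => ∑ i, (W i ω) ^ 2 :=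
      Finset.measurable_sum _ fun i _ => (hWmeas i).pow_const 2
    exact measurableSet_lt this measurable_const
  -- pointwise bound
  have hpoint : ∀ ω : Ω, {ω : Ω | ∑ i, (W i ω) ^ 2 < c}.indicator (fun _ => (1 : ℝ≥0∞)) ω ≤
      ENNReal.ofReal (rexp (l * c)) * ∏ i, g i (fun j => A i j ω) := by
    intro ω
    have hrhs : ENNReal.ofReal (rexp (l * c)) * ∏ i, g i (fun j => A i j ω) =
        ENNReal.ofReal (rexp (l * (c - ∑ i, (W i ω) ^ 2))) := by
      have h2 : ∀ i : Fin d, g i (fun j => A i j ω) =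
          ENNReal.ofReal (rexp (-(l * (W i ω) ^ 2))) := fun i => rfl
      simp_rw [h2]
      rw [← ENNReal.ofReal_prod_of_nonneg (fun i _ => (Real.exp_nonneg _)),
        ← Real.exp_sum, ← ENNReal.ofReal_mul (Real.exp_nonneg _), ← Real.exp_add]
      congr 1
      have hs : ∑ x : Fin d, -(l * W x ω ^ 2) = -(l * ∑ x : Fin d, W x ω ^ 2) := by
        rw [Finset.mul_sum, ← Finset.sum_neg_distrib]
      rw [hs]
      ring
    rw [hrhs]
    by_cases hω : ω ∈ {ω : Ω | ∑ i, (W i ω) ^ 2 < c}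
    · rw [Set.indicator_of_mem hω]
      rw [show (1 : ℝ≥0∞) = ENNReal.ofReal 1 by simp]
      apply ENNReal.ofReal_le_ofReal
      rw [← Real.exp_zero]
      apply Real.exp_le_exp.2
      have := hω
      simp only [Set.mem_setOf_eq] at this
      nlinarith
    · rw [Set.indicator_of_notMem hω]
      exact zero_le
  -- Chernoff
  have hch : ℙ {ω : Ω | ∑ i, (W i ω) ^ 2 < c} ≤
      ENNReal.ofReal (rexp (l * c)) * ∏ i : Fin d, ∫⁻ ω, g i (fun j => A i j ω) ∂ℙ := by
    rw [← lintegral_indicator_one hEv]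
    calc ∫⁻ ω, {ω : Ω | ∑ i, (W i ω) ^ 2 < c}.indicator (fun _ => (1 : ℝ≥0∞)) ω ∂ℙ
        ≤ ∫⁻ ω, ENNReal.ofReal (rexp (l * c)) * ∏ i, g i (fun j => A i j ω) ∂ℙ :=
          lintegral_mono hpoint
      _ = ENNReal.ofReal (rexp (l * c)) * ∫⁻ ω, ∏ i, g i (fun j => A i j ω) ∂ℙ := by
          have hm : Measurable fun ω => ∏ i : Fin d, g i (fun j => A i j ω) :=
            Finset.measurable_prod _ fun i _ =>
              (hgmeas i).comp (measurable_pi_lambda _ fun j => hmeas i j)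
          rw [lintegral_const_mul _ hm]
      _ = _ := by
          rw [lintegral_prod_rows hmeas hindep g hgmeas Finset.univ]
  -- compute each factor
  have hfac : ∀ i : Fin d, ∫⁻ ω, g i (fun j => A i j ω) ∂ℙ =
      ENNReal.ofReal (√(1 - t)) := by
    intro i
    have he : ∫⁻ ω, g i (fun j => A i j ω) ∂ℙ =
        ∫⁻ x : ℝ, ENNReal.ofReal (rexp (-(l * x ^ 2))) ∂(Measure.map (W i) ℙ) := by
      rw [lintegral_map (by fun_prop) (hWmeas i)]
    rw [he, hWlaw i, lintegral_exp_neg_sq V hlpos.le]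
    congr 1
    have h2lv : 1 + 2 * l * (V : ℝ) = (1 - t)⁻¹ := by
      rw [hVR, hl]
      field_simp
      try ring
    rw [h2lv, Real.sqrt_inv, inv_inv]
  -- final numeric computation
  have hlc : l * c = t * d / 2 := by
    rw [hl, hc]
    field_simp
    try ring
  calc ℙ {ω : Ω | ∑ i, (W i ω) ^ 2 < c}
      ≤ ENNReal.ofReal (rexp (l * c)) * ∏ i : Fin d, ENNReal.ofReal (√(1 - t)) := by
        rw [← Finset.prod_congr rfl fun i _ => hfac i]
        exact hch
    _ = ENNReal.ofReal (rexp (t * d / 2) * (√(1 - t)) ^ d) := by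
        rw [Finset.prod_const, Finset.card_univ, Fintype.card_fin, hlc,
          ← ENNReal.ofReal_pow (Real.sqrt_nonneg _), ← ENNReal.ofReal_mul (Real.exp_nonneg _)]
    _ = ENNReal.ofReal (Real.exp (((d : ℝ) / 2) * (t + Real.log (1 - t)))) := by
        congr 1
        have hsq : (√(1 - t)) ^ d = Real.exp (Real.log (1 - t) * ((d : ℝ) / 2)) := by
          rw [Real.sqrt_eq_rpow, ← Real.rpow_natCast ((1 - t) ^ ((1:ℝ)/2)) d,
            ← Real.rpow_mul h1t.le, Real.rpow_def_of_pos h1t]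
          congr 1
          ring
        rw [hsq, ← Real.exp_add]
        congr 1
        ring

end ChiSqAux

open ChiSqAux in
/-- Uniform lower-tail bound on `‖A h‖₂²` over a finite set `S`, for `A` with i.i.d. `N(0,1)`
entries. -/
theorem matrix_norm_sq_uniform_lower_tail
    {Ω : Type*} [MeasureSpace Ω] [IsProbabilityMeasure (ℙ : Measure Ω)]
    (d n : ℕ) (hd : 0 < d) (hn : 0 < n)
    (A : Fin d → Fin n → Ω → ℝ)
    (hindep : iIndepFun (fun p : Fin d × Fin n => A p.1 p.2) ℙ)
    (hA : ∀ i j, Measure.map (A i j) ℙ = gaussianReal 0 1)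
    (S : Finset (Fin n → ℝ)) (N : ℕ) (hS : S.card ≤ N)
    (t : ℝ) (ht0 : 0 < t) (ht1 : t < 1) :
    ℙ {ω | ∃ h ∈ S,
        ∑ i, (∑ j, A i j ω * h j) ^ 2 < (1 - t) * d * ∑ j, (h j) ^ 2} ≤
      (N : ℝ≥0∞) * ENNReal.ofReal (Real.exp (((d : ℝ) / 2) * (t + Real.log (1 - t)))) := by
  classical
  -- measurable modifications
  have hAEm : ∀ i j, AEMeasurable (A i j) ℙ := fun i j =>
    aemeasurable_of_map_neZero (by rw [hA i j]; infer_instance)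
  set A' : Fin d → Fin n → Ω → ℝ := fun i j => (hAEm i j).mk (A i j) with hA'def
  have hmeas' : ∀ i j, Measurable (A' i j) := fun i j => (hAEm i j).measurable_mk
  have haeq : ∀ i j, A i j =ᵐ[ℙ] A' i j := fun i j => (hAEm i j).ae_eq_mk
  have hindep' : iIndepFun (fun p : Fin d × Fin n => A' p.1 p.2) ℙ :=
    iIndepFun_congr_ae hindep (fun p => haeq p.1 p.2)
  have hA' : ∀ i j, Measure.map (A' i j) ℙ = gaussianReal 0 1 := fun i j => by
    rw [← Measure.map_congr (haeq i j), hA i j]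
  -- union bound
  have hunion : {ω : Ω | ∃ h ∈ S,
      ∑ i, (∑ j, A i j ω * h j) ^ 2 < (1 - t) * d * ∑ j, (h j) ^ 2} =
      ⋃ h ∈ S, {ω : Ω | ∑ i, (∑ j, A i j ω * h j) ^ 2 < (1 - t) * d * ∑ j, (h j) ^ 2} := by
    ext ω; simp
  rw [hunion]
  have hae : ∀ᵐ ω ∂(ℙ : Measure Ω), ∀ i, ∀ j, A i j ω = A' i j ω := by
    rw [ae_all_iff]
    intro i
    rw [ae_all_iff]
    exact fun j => haeq i j
  have hone : ∀ h : Fin n → ℝ,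
      ℙ {ω : Ω | ∑ i, (∑ j, A i j ω * h j) ^ 2 < (1 - t) * d * ∑ j, (h j) ^ 2} ≤
        ENNReal.ofReal (Real.exp (((d : ℝ) / 2) * (t + Real.log (1 - t)))) := by
    intro h
    have hcong : ({ω : Ω | ∑ i, (∑ j, A i j ω * h j) ^ 2 < (1 - t) * d * ∑ j, (h j) ^ 2} : Set Ω)
        =ᵐ[ℙ] {ω : Ω | ∑ i, (∑ j, A' i j ω * h j) ^ 2 < (1 - t) * d * ∑ j, (h j) ^ 2} := by
      rw [Filter.eventuallyEq_set]
      filter_upwards [hae] with ω hω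
      have heq : ∀ i, (∑ j, A i j ω * h j) = ∑ j, A' i j ω * h j := fun i =>
        Finset.sum_congr rfl fun j _ => by rw [hω i j]
      constructor <;> intro hlt <;>
        [ (simpa [← heq] using hlt) ;
          (simpa [heq] using hlt) ]
    rw [measure_congr hcong]
    exact chernoff_one hmeas' hindep' hA' h ht0 ht1
  calc ℙ (⋃ h ∈ S, {ω : Ω | ∑ i, (∑ j, A i j ω * h j) ^ 2 < (1 - t) * d * ∑ j, (h j) ^ 2})
      ≤ ∑ h ∈ S, ℙ {ω : Ω | ∑ i, (∑ j, A i j ω * h j) ^ 2 < (1 - t) * d * ∑ j, (h j) ^ 2} :=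
        measure_biUnion_finset_le S _
    _ ≤ ∑ _h ∈ S, ENNReal.ofReal (Real.exp (((d : ℝ) / 2) * (t + Real.log (1 - t)))) :=
        Finset.sum_le_sum fun h _ => hone h
    _ = (S.card : ℝ≥0∞) * ENNReal.ofReal (Real.exp (((d : ℝ) / 2) * (t + Real.log (1 - t)))) := by
        simp [Finset.sum_const, nsmul_eq_mul]
    _ ≤ (N : ℝ≥0∞) * ENNReal.ofReal (Real.exp (((d : ℝ) / 2) * (t + Real.log (1 - t)))) := by
        exact mul_le_mul_left (by exact_mod_cast hS) _
end

section
/- Let A be a d×n random matrix whose entries A_{ij} are i.i.d. standard Gaussian N(0,1) random variables, and let S be a finite set of vectors in ℝ^n with |S| ≤ N. Then for every τ with 0 < τ < 1, P(there exists h ∈ S with ‖A h‖_2 < τ √d ‖h‖_2) ≤ N · exp((d/2)(1 - τ^2 + 2 log τ)). -/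
open MeasureTheory ProbabilityTheory ENNReal

section Aux

private lemma gauss_int  (c b u : ℝ) (hc : 0 ≤ c) :
    ∫ x, Real.exp (-(c * (u + b * x) ^ 2)) ∂(gaussianReal 0 1)
      = Real.exp (-(c * u ^ 2 / (1 + 2 * c * b ^ 2))) / Real.sqrt (1 + 2 * c * b ^ 2) := by
  have hB : (0:ℝ) < c * b ^ 2 + 1/2 := by positivity
  set B : ℝ := c * b ^ 2 + 1/2 with hBdef
  set m : ℝ := c * b * u / B with hmdef
  have h2B : 1 + 2 * c * b ^ 2 = 2 * B := by rw [hBdef]; ring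
  rw [gaussianReal_of_var_ne_zero 0 one_ne_zero]
  have hpdf : (gaussianPDF 0 1) = fun x => ((Real.toNNReal (gaussianPDFReal 0 1 x) : NNReal) : ℝ≥0∞) := rfl
  rw [hpdf, integral_withDensity_eq_integral_smul
    ((measurable_gaussianPDFReal 0 1).real_toNNReal) _]
  have key : ∀ x : ℝ, (Real.toNNReal (gaussianPDFReal 0 1 x) : NNReal) • Real.exp (-(c * (u + b * x) ^ 2))
      = ((Real.sqrt (2 * Real.pi))⁻¹ * Real.exp (-(c * u ^ 2 / (2 * B)))) * Real.exp (-B * (x + m) ^ 2) := by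
    intro x
    rw [NNReal.smul_def, Real.coe_toNNReal _ (gaussianPDFReal_nonneg 0 1 x)]
    rw [gaussianPDFReal]
    rw [smul_eq_mul, mul_assoc, ← Real.exp_add, NNReal.coe_one, mul_one,
      mul_assoc, ← Real.exp_add]
    congr 2
    rw [hmdef, hBdef]
    field_simp
    ring
  rw [integral_congr_ae (Filter.Eventually.of_forall key), integral_const_mul]
  have hshift : ∫ x : ℝ, Real.exp (-B * (x + m) ^ 2)
      = ∫ x : ℝ, Real.exp (-B * x ^ 2) := by
    rw [← integral_add_left_eq_self (fun y => Real.exp (-B * y ^ 2)) m]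
    congr 1; funext x; rw [add_comm]
  rw [hshift, integral_gaussian]
  rw [h2B]
  have hπ : (0:ℝ) < Real.pi := Real.pi_pos
  rw [Real.sqrt_div hπ.le, Real.sqrt_mul (by norm_num : (0:ℝ) ≤ 2)]
  have h1 : Real.sqrt Real.pi ≠ 0 := by positivity
  have h2 : Real.sqrt 2 ≠ 0 := by positivity
  have h3 : Real.sqrt B ≠ 0 := by positivity
  field_simp
  ring_nf
  rw [Real.sqrt_mul hB.le, mul_comm]

variable {Ω : Type*} [MeasureSpace Ω]


noncomputable def maskF {d n : ℕ} (A : Fin d → Fin n → Ω → ℝ)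
    (T : Finset (Fin d × Fin n)) (ω : Ω) : Fin d × Fin n → ℝ :=
  fun p => if p ∈ T then A p.1 p.2 ω else 0

lemma indep_mask {d n : ℕ} (A : Fin d → Fin n → Ω → ℝ)
    (hmeas : ∀ i j, Measurable (A i j))
    (hindep : iIndepFun (fun p : Fin d × Fin n => A p.1 p.2) ℙ)
    {T₁ T₂ : Finset (Fin d × Fin n)} (hdis : Disjoint T₁ T₂)
    {Φ₁ Φ₂ : (Fin d × Fin n → ℝ) → ℝ} (h1 : Measurable Φ₁) (h2 : Measurable Φ₂) :
    IndepFun (fun ω => Φ₁ (maskF A T₁ ω)) (fun ω => Φ₂ (maskF A T₂ ω)) ℙ := by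
  classical
  have base := hindep.indepFun_finset T₁ T₂ hdis (fun p => hmeas p.1 p.2)
  have hext : ∀ T : Finset (Fin d × Fin n),
      Measurable (fun (y : {x // x ∈ T} → ℝ) (p : Fin d × Fin n) =>
        if hp : p ∈ T then y ⟨p, hp⟩ else 0) := by
    intro T
    apply measurable_pi_lambda
    intro p
    by_cases hp : p ∈ T
    · simpa [hp] using measurable_pi_apply (⟨p, hp⟩ : {x // x ∈ T})
    · simpa [hp] using measurable_const
  have comp := base.comp (h1.comp (hext T₁)) (h2.comp (hext T₂))
  have e : ∀ (T : Finset (Fin d × Fin n)) (ω : Ω),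
      (fun p => if hp : p ∈ T then
        ((fun q : {x // x ∈ T} => A (q : Fin d × Fin n).1 (q : Fin d × Fin n).2 ω) ⟨p, hp⟩)
        else 0) = maskF A T ω := by
    intro T ω
    funext p
    by_cases hp : p ∈ T <;> simp [maskF, hp]
  convert comp using 2 <;> rw [← e] <;> rfl

variable [IsProbabilityMeasure (ℙ : Measure Ω)]

private lemma row_integral {d n : ℕ} (A : Fin d → Fin n → Ω → ℝ)
    (hmeas : ∀ i j, Measurable (A i j))
    (hindep : iIndepFun (fun p : Fin d × Fin n => A p.1 p.2) ℙ)
    (hA : ∀ i j, Measure.map (A i j) ℙ = gaussianReal 0 1)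
    (h : Fin n → ℝ) (i : Fin d) (s : Finset (Fin n)) :
    ∀ (c t : ℝ), 0 ≤ c →
    ∫ ω, Real.exp (-(c * (t + ∑ j ∈ s, A i j ω * h j) ^ 2)) ∂ℙ
      = Real.exp (-(c * t ^ 2 / (1 + 2 * c * ∑ j ∈ s, (h j) ^ 2)))
          / Real.sqrt (1 + 2 * c * ∑ j ∈ s, (h j) ^ 2) := by
  classical
  induction s using Finset.induction_on with
  | empty =>
      intro c t hc
      simp [Real.sqrt_one]
  | @insert j s hj ih =>
      intro c t hc
      set r : ℝ := 1 + 2 * c * (h j) ^ 2 with hr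
      have hr0 : (0:ℝ) < r := by nlinarith [mul_nonneg hc (sq_nonneg (h j))]
      set V : ℝ := ∑ j' ∈ s, (h j') ^ 2 with hV
      have hV0 : (0:ℝ) ≤ V := Finset.sum_nonneg fun _ _ => sq_nonneg _
      set W : Ω → ℝ := fun ω => ∑ j' ∈ s, A i j' ω * h j' with hW
      have hWmeas : Measurable W :=
        Finset.measurable_sum s (fun j' _ => (hmeas i j').mul_const _)
      -- independence of W and A i j
      have hind : IndepFun W (A i j) ℙ := by
        have h1 : Measurable (fun x : Fin d × Fin n → ℝ => ∑ j' ∈ s, x (i, j') * h j') :=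
          Finset.measurable_sum s (fun j' _ => (measurable_pi_apply _).mul_const _)
        have h2 : Measurable (fun x : Fin d × Fin n → ℝ => x (i, j)) := measurable_pi_apply _
        have hdis : Disjoint ({i} ×ˢ s) ({(i,j)} : Finset (Fin d × Fin n)) := by
          rw [Finset.disjoint_right]
          intro p hp
          simp only [Finset.mem_singleton] at hp
          subst hp
          simp [Finset.mem_product, hj]
        have key := indep_mask A hmeas hindep hdis h1 h2
        have e1 : (fun ω => ∑ j' ∈ s, (maskF A ({i} ×ˢ s) ω) (i, j') * h j') = W := by
          funext ω
          apply Finset.sum_congr rfl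
          intro j' hj'
          simp [maskF, Finset.mem_product, hj']
        have e2 : (fun ω => (maskF A ({(i,j)} : Finset (Fin d × Fin n)) ω) (i, j)) = A i j := by
          funext ω; simp [maskF]
        rwa [e1, e2] at key
      -- pair law
      have hpair : Measure.map (fun ω => (W ω, A i j ω)) ℙ
          = (Measure.map W ℙ).prod (gaussianReal 0 1) := by
        rw [← hA i j]
        exact (indepFun_iff_map_prod_eq_prod_map_map hWmeas.aemeasurable
          (hmeas i j).aemeasurable).mp hind
      set f : ℝ × ℝ → ℝ := fun q => Real.exp (-(c * ((t + q.1) + h j * q.2) ^ 2)) with hf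
      have hfmeas : Measurable f := by
        apply Real.measurable_exp.comp
        fun_prop
      haveI : IsProbabilityMeasure (Measure.map W ℙ) :=
        Measure.isProbabilityMeasure_map hWmeas.aemeasurable
      have hint : Integrable f ((Measure.map W ℙ).prod (gaussianReal 0 1)) := by
        apply Integrable.mono' (integrable_const 1) hfmeas.aestronglyMeasurable
        filter_upwards with q
        rw [Real.norm_eq_abs, abs_of_pos (Real.exp_pos _), Real.exp_le_one_iff]
        simpa using mul_nonneg hc (sq_nonneg ((t + q.1) + h j * q.2))
      have hLHS : (fun ω => Real.exp (-(c * (t + ∑ j' ∈ insert j s, A i j' ω * h j') ^ 2)))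
          = fun ω => f (W ω, A i j ω) := by
        funext ω
        rw [hf]
        simp only
        congr 2
        rw [Finset.sum_insert hj]
        ring
      calc ∫ ω, Real.exp (-(c * (t + ∑ j' ∈ insert j s, A i j' ω * h j') ^ 2)) ∂ℙ
          = ∫ ω, f (W ω, A i j ω) ∂ℙ := by rw [hLHS]
        _ = ∫ q, f q ∂(Measure.map (fun ω => (W ω, A i j ω)) ℙ) :=
            (integral_map (hWmeas.prodMk (hmeas i j)).aemeasurable
              hfmeas.aestronglyMeasurable).symm
        _ = ∫ q, f q ∂((Measure.map W ℙ).prod (gaussianReal 0 1)) := by rw [hpair]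
        _ = ∫ w, ∫ x, f (w, x) ∂(gaussianReal 0 1) ∂(Measure.map W ℙ) := integral_prod f hint
        _ = ∫ w, Real.exp (-(c * (t + w) ^ 2 / r)) / Real.sqrt r ∂(Measure.map W ℙ) := by
            apply integral_congr_ae (Filter.Eventually.of_forall fun w => ?_)
            exact gauss_int c (h j) (t + w) hc
        _ = (Real.sqrt r)⁻¹ * ∫ w, Real.exp (-((c / r) * (t + w) ^ 2)) ∂(Measure.map W ℙ) := by
            rw [← integral_const_mul]
            apply integral_congr_ae (Filter.Eventually.of_forall fun w => ?_)
            rw [div_eq_mul_inv, mul_comm]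
            congr 2
            field_simp
        _ = (Real.sqrt r)⁻¹ * ∫ ω, Real.exp (-((c / r) * (t + W ω) ^ 2)) ∂ℙ := by
            rw [integral_map hWmeas.aemeasurable]
            exact (Real.measurable_exp.comp (by fun_prop)).aestronglyMeasurable
        _ = (Real.sqrt r)⁻¹ * (Real.exp (-((c / r) * t ^ 2 / (1 + 2 * (c / r) * V)))
              / Real.sqrt (1 + 2 * (c / r) * V)) := by
            rw [ih (c / r) t (div_nonneg hc hr0.le)]
        _ = Real.exp (-(c * t ^ 2 / (1 + 2 * c * ∑ j' ∈ insert j s, (h j') ^ 2)))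
              / Real.sqrt (1 + 2 * c * ∑ j' ∈ insert j s, (h j') ^ 2) := by
            have hsum : ∑ j' ∈ insert j s, (h j') ^ 2 = (h j) ^ 2 + V :=
              Finset.sum_insert hj
            rw [hsum]
            set R : ℝ := 1 + 2 * c * ((h j) ^ 2 + V) with hRdef
            have hR0 : (0:ℝ) < R := by
              nlinarith [mul_nonneg hc (add_nonneg (sq_nonneg (h j)) hV0)]
            have e1 : 1 + 2 * (c / r) * V = R / r := by
              rw [hRdef, hr]; field_simp; ring
            have e2 : (c / r) * t ^ 2 / (R / r) = c * t ^ 2 / R := by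
              field_simp
            rw [e1, e2, Real.sqrt_div hR0.le]
            have h3 : Real.sqrt r ≠ 0 := by positivity
            have h4 : Real.sqrt R ≠ 0 := by positivity
            field_simp

private lemma rows_prod {d n : ℕ} (A : Fin d → Fin n → Ω → ℝ)
    (hmeas : ∀ i j, Measurable (A i j))
    (hindep : iIndepFun (fun p : Fin d × Fin n => A p.1 p.2) ℙ)
    (h : Fin n → ℝ) (c : ℝ) (F : Finset (Fin d)) :
    ∫ ω, ∏ i ∈ F, Real.exp (-(c * (∑ j, A i j ω * h j) ^ 2)) ∂ℙ
      = ∏ i ∈ F, ∫ ω, Real.exp (-(c * (∑ j, A i j ω * h j) ^ 2)) ∂ℙ := by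
  classical
  induction F using Finset.induction_on with
  | empty => simp
  | @insert i F hi ih =>
      have hXmeas : ∀ i' : Fin d,
          Measurable fun ω => Real.exp (-(c * (∑ j, A i' j ω * h j) ^ 2)) := fun i' =>
        Real.measurable_exp.comp
          ((((Finset.measurable_sum Finset.univ fun j _ =>
            (hmeas i' j).mul_const (h j)).pow_const 2).const_mul c).neg)
      have hind : IndepFun (fun ω => Real.exp (-(c * (∑ j, A i j ω * h j) ^ 2)))
          (fun ω => ∏ i' ∈ F, Real.exp (-(c * (∑ j, A i' j ω * h j) ^ 2))) ℙ := by
        have mSum : ∀ i' : Fin d,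
            Measurable fun x : Fin d × Fin n → ℝ => ∑ j, x (i', j) * h j := fun i' =>
          Finset.measurable_sum Finset.univ fun j _ => (measurable_pi_apply _).mul_const _
        have h1 : Measurable fun x : Fin d × Fin n → ℝ =>
            Real.exp (-(c * (∑ j, x (i, j) * h j) ^ 2)) :=
          Real.measurable_exp.comp ((((mSum i).pow_const 2).const_mul c).neg)
        have h2 : Measurable fun x : Fin d × Fin n → ℝ =>
            ∏ i' ∈ F, Real.exp (-(c * (∑ j, x (i', j) * h j) ^ 2)) :=
          Finset.measurable_prod F fun i' _ =>
            Real.measurable_exp.comp ((((mSum i').pow_const 2).const_mul c).neg)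
        have hdis : Disjoint ({i} ×ˢ (Finset.univ : Finset (Fin n)))
            (F ×ˢ (Finset.univ : Finset (Fin n))) := by
          rw [Finset.disjoint_left]
          intro p hp
          simp only [Finset.mem_product, Finset.mem_singleton] at hp ⊢
          intro hcon
          exact hi (hp.1 ▸ hcon.1)
        have key := indep_mask A hmeas hindep hdis h1 h2
        have e1 : (fun ω => Real.exp
            (-(c * (∑ j, (maskF A ({i} ×ˢ Finset.univ) ω) (i, j) * h j) ^ 2)))
            = fun ω => Real.exp (-(c * (∑ j, A i j ω * h j) ^ 2)) := by
          funext ω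
          have : (∑ j, (maskF A ({i} ×ˢ Finset.univ) ω) (i, j) * h j)
              = ∑ j, A i j ω * h j :=
            Finset.sum_congr rfl fun j _ => by simp [maskF]
          rw [this]
        have e2 : (fun ω => ∏ i' ∈ F, Real.exp
            (-(c * (∑ j, (maskF A (F ×ˢ Finset.univ) ω) (i', j) * h j) ^ 2)))
            = fun ω => ∏ i' ∈ F, Real.exp (-(c * (∑ j, A i' j ω * h j) ^ 2)) := by
          funext ω
          apply Finset.prod_congr rfl
          intro i' hi'
          have : (∑ j, (maskF A (F ×ˢ Finset.univ) ω) (i', j) * h j)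
              = ∑ j, A i' j ω * h j :=
            Finset.sum_congr rfl fun j _ => by simp [maskF, hi']
          rw [this]
        rwa [e1, e2] at key
      rw [Finset.prod_insert hi]
      have hmul := hind.integral_mul_eq_mul_integral
        (hXmeas i).aestronglyMeasurable
        (Finset.measurable_prod F fun i' _ => hXmeas i').aestronglyMeasurable
      have : (fun ω => ∏ i' ∈ insert i F, Real.exp (-(c * (∑ j, A i' j ω * h j) ^ 2)))
          = (fun ω => Real.exp (-(c * (∑ j, A i j ω * h j) ^ 2)))
            * (fun ω => ∏ i' ∈ F, Real.exp (-(c * (∑ j, A i' j ω * h j) ^ 2))) := by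
        funext ω
        simp [Finset.prod_insert hi]
      rw [this, hmul, ih]

end Aux

/-- Uniform lower-tail bound on `‖A h‖₂` over a finite set `S`, for `A` with i.i.d. `N(0,1)`
entries. -/
theorem matrix_norm_uniform_lower_tail
    {Ω : Type*} [MeasureSpace Ω] [IsProbabilityMeasure (ℙ : Measure Ω)]
    (d n : ℕ) (hd : 0 < d) (hn : 0 < n)
    (A : Fin d → Fin n → Ω → ℝ)
    (hindep : iIndepFun (fun p : Fin d × Fin n => A p.1 p.2) ℙ)
    (hA : ∀ i j, Measure.map (A i j) ℙ = gaussianReal 0 1)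
    (S : Finset (Fin n → ℝ)) (N : ℕ) (hS : S.card ≤ N)
    (τ : ℝ) (hτ0 : 0 < τ) (hτ1 : τ < 1) :
    ℙ {ω | ∃ h ∈ S,
        Real.sqrt (∑ i, (∑ j, A i j ω * h j) ^ 2)
          < τ * Real.sqrt d * Real.sqrt (∑ j, (h j) ^ 2)} ≤
      (N : ℝ≥0∞) *
        ENNReal.ofReal (Real.exp (((d : ℝ) / 2) * (1 - τ ^ 2 + 2 * Real.log τ))) := by
  classical
  -- measurable modification
  have hae : ∀ i j, AEMeasurable (A i j) ℙ := by
    intro i j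
    by_contra hcon
    have h0 := hA i j
    rw [Measure.map_of_not_aemeasurable hcon] at h0
    exact (IsProbabilityMeasure.ne_zero (gaussianReal 0 1)) h0.symm
  set A' : Fin d → Fin n → Ω → ℝ := fun i j => (hae i j).mk (A i j) with hA'def
  have hmeas' : ∀ i j, Measurable (A' i j) := fun i j => (hae i j).measurable_mk
  have haeeq : ∀ i j, A i j =ᵐ[ℙ] A' i j := fun i j => (hae i j).ae_eq_mk
  have hall : ∀ᵐ ω ∂ℙ, ∀ p : Fin d × Fin n, A p.1 p.2 ω = A' p.1 p.2 ω := by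
    rw [ae_all_iff]; exact fun p => haeeq p.1 p.2
  have hA' : ∀ i j, Measure.map (A' i j) ℙ = gaussianReal 0 1 := fun i j => by
    rw [← Measure.map_congr (haeeq i j)]; exact hA i j
  have hindep' : iIndepFun (fun p : Fin d × Fin n => A' p.1 p.2) ℙ := by
    rw [iIndepFun_iff_measure_inter_preimage_eq_mul] at hindep ⊢
    intro F sets hsets
    have hpre : ∀ p : Fin d × Fin n, ℙ (A' p.1 p.2 ⁻¹' sets p) = ℙ (A p.1 p.2 ⁻¹' sets p) := by
      intro p
      apply measure_congr
      rw [Filter.eventuallyEq_set]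
      filter_upwards [haeeq p.1 p.2] with ω hω
      simp [Set.mem_preimage, hω]
    have hpre2 : ℙ (⋂ p ∈ F, A' p.1 p.2 ⁻¹' sets p) = ℙ (⋂ p ∈ F, A p.1 p.2 ⁻¹' sets p) := by
      apply measure_congr
      rw [Filter.eventuallyEq_set]
      filter_upwards [hall] with ω hω
      simp only [Set.mem_iInter, Set.mem_preimage]
      constructor
      · intro h' p hp; rw [hω p]; exact h' p hp
      · intro h' p hp; rw [← hω p]; exact h' p hp
    rw [hpre2, hindep F hsets]
    exact Finset.prod_congr rfl fun p _ => (hpre p).symm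
  -- notation
  set lam : ℝ := (1 - τ ^ 2) / (2 * τ ^ 2) with hlam
  have hlam0 : 0 < lam := by
    apply div_pos (by nlinarith) (by positivity)
  set Breal : ℝ := Real.exp (((d : ℝ) / 2) * (1 - τ ^ 2 + 2 * Real.log τ)) with hBreal
  -- per-vector bound
  have key : ∀ h0 ∈ S, ℙ {ω | Real.sqrt (∑ i, (∑ j, A i j ω * h0 j) ^ 2)
      < τ * Real.sqrt d * Real.sqrt (∑ j, (h0 j) ^ 2)} ≤ ENNReal.ofReal Breal := by
    intro h0 _
    set v : ℝ := ∑ j, (h0 j) ^ 2 with hv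
    have hv0 : (0:ℝ) ≤ v := Finset.sum_nonneg fun _ _ => sq_nonneg _
    rcases eq_or_lt_of_le hv0 with hveq | hvpos
    · have hempty : {ω | Real.sqrt (∑ i, (∑ j, A i j ω * h0 j) ^ 2)
          < τ * Real.sqrt d * Real.sqrt v} = (∅ : Set Ω) := by
        ext ω
        simp only [Set.mem_setOf_eq, Set.mem_empty_iff_false, iff_false]
        rw [← hveq, Real.sqrt_zero, mul_zero]
        exact not_lt.mpr (Real.sqrt_nonneg _)
      rw [hempty, measure_empty]
      exact zero_le
    · -- replace A by A'
      have hset : ℙ {ω | Real.sqrt (∑ i, (∑ j, A i j ω * h0 j) ^ 2)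
            < τ * Real.sqrt d * Real.sqrt v}
          = ℙ {ω | Real.sqrt (∑ i, (∑ j, A' i j ω * h0 j) ^ 2)
            < τ * Real.sqrt d * Real.sqrt v} := by
        apply measure_congr
        rw [Filter.eventuallyEq_set]
        filter_upwards [hall] with ω hω
        have hsums : (∑ i, (∑ j, A i j ω * h0 j) ^ 2) = ∑ i, (∑ j, A' i j ω * h0 j) ^ 2 :=
          Finset.sum_congr rfl fun i _ => by
            rw [Finset.sum_congr rfl fun j _ => by rw [hω (i, j)]]
        simp only [Set.mem_setOf_eq, hsums]
      rw [hset]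
      set X : Ω → ℝ := fun ω => ∑ i, (∑ j, A' i j ω * h0 j) ^ 2 with hX
      have hXmeas : Measurable X :=
        Finset.measurable_sum _ fun i _ =>
          (Finset.measurable_sum _ fun j _ => (hmeas' i j).mul_const _).pow_const 2
      have hXnn : ∀ ω, 0 ≤ X ω := fun ω => Finset.sum_nonneg fun _ _ => sq_nonneg _
      have hsub : {ω | Real.sqrt (X ω) < τ * Real.sqrt d * Real.sqrt v}
          ⊆ {ω | X ω ≤ τ ^ 2 * d * v} := by
        intro ω hω
        simp only [Set.mem_setOf_eq] at hω ⊢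
        have hy : 0 < τ * Real.sqrt d * Real.sqrt v :=
          mul_pos (mul_pos hτ0 (Real.sqrt_pos.mpr (by exact_mod_cast hd))) (Real.sqrt_pos.mpr hvpos)
        have hlt := (Real.sqrt_lt' hy).mp hω
        have : (τ * Real.sqrt d * Real.sqrt v) ^ 2 = τ ^ 2 * d * v := by
          rw [mul_pow, mul_pow, Real.sq_sqrt (Nat.cast_nonneg d), Real.sq_sqrt hv0]
        linarith [hlt, this.le]
      refine le_trans (measure_mono hsub) ?_
      set c : ℝ := lam / v with hc
      have hc0 : 0 ≤ c := le_of_lt (div_pos hlam0 hvpos)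
      have hint : Integrable (fun ω => Real.exp (-c * X ω)) ℙ := by
        apply Integrable.mono' (integrable_const 1)
          (Real.measurable_exp.comp (hXmeas.const_mul (-c))).aestronglyMeasurable
        filter_upwards with ω
        simp only [Function.comp_apply]
        rw [Real.norm_eq_abs, abs_of_pos (Real.exp_pos _), Real.exp_le_one_iff]
        have := mul_nonneg hc0 (hXnn ω)
        nlinarith
      have hcher := measure_le_le_exp_mul_mgf (μ := ℙ) (X := X) (τ ^ 2 * d * v)
        (neg_nonpos.mpr hc0) hint
      -- compute the mgf
      have hmgf : mgf X ℙ (-c) = τ ^ d := by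
        have e0 : mgf X ℙ (-c) = ∫ ω, Real.exp (-c * X ω) ∂ℙ := rfl
        have e1 : (fun ω => Real.exp (-c * X ω))
            = fun ω => ∏ i, Real.exp (-(c * (∑ j, A' i j ω * h0 j) ^ 2)) := by
          funext ω
          rw [← Real.exp_sum]
          congr 1
          rw [hX]
          rw [Finset.mul_sum]
          exact Finset.sum_congr rfl fun i _ => by ring
        have e2 : ∀ i : Fin d, ∫ ω, Real.exp (-(c * (∑ j, A' i j ω * h0 j) ^ 2)) ∂ℙ = τ := by
          intro i
          have e3 : (fun ω => Real.exp (-(c * (∑ j, A' i j ω * h0 j) ^ 2)))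
              = fun ω => Real.exp (-(c * ((0:ℝ) + ∑ j, A' i j ω * h0 j) ^ 2)) := by
            funext ω; rw [zero_add]
          rw [e3, row_integral A' hmeas' hindep' hA' h0 i Finset.univ c 0 hc0]
          have hcv : 1 + 2 * c * v = (1 / τ) ^ 2 := by
            rw [hc, hlam]
            field_simp
            ring
          rw [← hv, hcv]
          rw [Real.sqrt_sq (by positivity)]
          simp [hτ0.ne']
        rw [e0, e1, rows_prod A' hmeas' hindep' h0 c Finset.univ]
        rw [Finset.prod_congr rfl fun i _ => e2 i]
        simp
      -- assemble
      have hfinal : Real.exp (-(-c) * (τ ^ 2 * d * v)) * mgf X ℙ (-c) = Breal := by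
        rw [hmgf, hBreal]
        have hτd : τ ^ d = Real.exp (d * Real.log τ) := by
          rw [Real.exp_nat_mul, Real.exp_log hτ0]
        rw [hτd, ← Real.exp_add]
        congr 1
        have hce : -(-c) * (τ ^ 2 * d * v) = (d : ℝ) * (1 - τ ^ 2) / 2 := by
          rw [neg_neg, hc, hlam]
          field_simp
        rw [hce]
        ring
      calc ℙ {ω | X ω ≤ τ ^ 2 * d * v}
          = ENNReal.ofReal ((ℙ {ω | X ω ≤ τ ^ 2 * d * v}).toReal) :=
            (ENNReal.ofReal_toReal (measure_ne_top _ _)).symm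
        _ ≤ ENNReal.ofReal Breal := by
            apply ENNReal.ofReal_le_ofReal
            rw [← hfinal]
            exact hcher
  -- union bound
  have hunion : {ω | ∃ h ∈ S, Real.sqrt (∑ i, (∑ j, A i j ω * h j) ^ 2)
        < τ * Real.sqrt d * Real.sqrt (∑ j, (h j) ^ 2)}
      = ⋃ h0 ∈ S, {ω | Real.sqrt (∑ i, (∑ j, A i j ω * h0 j) ^ 2)
        < τ * Real.sqrt d * Real.sqrt (∑ j, (h0 j) ^ 2)} := by
    ext ω
    simp [Set.mem_iUnion]
  rw [hunion]
  calc ℙ (⋃ h0 ∈ S, {ω | Real.sqrt (∑ i, (∑ j, A i j ω * h0 j) ^ 2)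
        < τ * Real.sqrt d * Real.sqrt (∑ j, (h0 j) ^ 2)})
      ≤ ∑ h0 ∈ S, ℙ {ω | Real.sqrt (∑ i, (∑ j, A i j ω * h0 j) ^ 2)
        < τ * Real.sqrt d * Real.sqrt (∑ j, (h0 j) ^ 2)} :=
        measure_biUnion_finset_le S _
    _ ≤ ∑ _h0 ∈ S, ENNReal.ofReal Breal := Finset.sum_le_sum key
    _ = (S.card : ℝ≥0∞) * ENNReal.ofReal Breal := by
        rw [Finset.sum_const, nsmul_eq_mul]
    _ ≤ (N : ℝ≥0∞) * ENNReal.ofReal Breal :=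
        mul_le_mul_left (by exact_mod_cast hS) _
end
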